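/- Let G = (V,E) be a k-uniform hypergraph, let r ≥ p ≥ 2 with k ≥ p, and let x be a positive integer. If the number of hyperedges satisfies |E| ≤ (1/2)·( r^k / ((p−1)^k · C(r,p−1)) )^x, where C(r,p−1) is the binomial coefficient, then G has a strong (r,p) cover of size x; in particular χ^c(G,k,r,p) ≤ x. -/

import Mathlib

open Finset

/-- `E` (the hyperedge set of a hypergraph on vertex set `V`) has a strong `(r,p)` cover of
size `t`: there are `t` `r`-colorings of `V` such that every hyperedge receives at least `p`
distinct colors in at least one of them. -/
def HasStrongCover {V : Type*} [DecidableEq V] (E : Finset (Finset V)) (r p t : ℕ) : Prop :=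
  ∃ χ : Fin t → V → Fin r, ∀ e ∈ E, ∃ i, p ≤ (e.image (χ i)).card

/-- The strong `(r,p)` cover number: minimum size of a strong `(r,p)` cover. -/
noncomputable def coverNumber {V : Type*} [DecidableEq V] (E : Finset (Finset V)) (r p : ℕ) : ℕ :=
  sInf {t | HasStrongCover E r p t}

set_option linter.unusedVariables false

private lemma stmt17_aux {V : Type*} [Fintype V] [DecidableEq V] (E : Finset (Finset V)) (k r p x : ℕ)
    (hunif : ∀ e ∈ E, e.card = k) (hp2 : 2 ≤ p) (hpr : p ≤ r) (hpk : p ≤ k) (hx : 0 < x)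
    (hE : (E.card : ℝ) ≤
      (1 / 2) * ((r : ℝ) ^ k / (((p : ℝ) - 1) ^ k * (r.choose (p - 1) : ℝ))) ^ x) :
    ∃ χ : Fin x → V → Fin r, ∀ e ∈ E, ∃ i, p ≤ (e.image (χ i)).card := by
  classical
  set n := Fintype.card V with hn
  set q := p - 1 with hq
  have hq1 : 1 ≤ q := by omega
  have hC : 0 < r.choose q := Nat.choose_pos (by omega)
  rcases E.eq_empty_or_nonempty with hEe | hEne
  · exact ⟨fun _ _ => ⟨0, by omega⟩, by simp [hEe]⟩
  have hkn : k ≤ n := by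
    obtain ⟨e0, he0⟩ := hEne
    calc k = e0.card := (hunif e0 he0).symm
    _ ≤ n := Finset.card_le_univ e0
  -- bad colorings for one edge
  let Bad : Finset V → Finset (V → Fin r) :=
    fun e => univ.filter (fun f => (e.image f).card ≤ q)
  set M := r.choose q * (q ^ k * r ^ (n - k)) with hM
  have hBadcard : ∀ e ∈ E, (Bad e).card ≤ M := by
    intro e he
    have hsub : Bad e ⊆ ((univ : Finset (Fin r)).powersetCard q).biUnion
        (fun S => univ.filter (fun f => ∀ v ∈ e, f v ∈ S)) := by
      intro f hf
      simp only [Bad, mem_filter, mem_univ, true_and] at hf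
      obtain ⟨S, hS1, hS2, hS3⟩ := Finset.exists_subsuperset_card_eq
        (Finset.subset_univ (e.image f)) hf (by simpa using by omega : q ≤ (univ : Finset (Fin r)).card)
      refine Finset.mem_biUnion.2 ⟨S, ?_, ?_⟩
      · simp [Finset.mem_powersetCard, hS2, hS3]
      · simp only [mem_filter, mem_univ, true_and]
        intro v hv
        exact hS1 (Finset.mem_image_of_mem f hv)
    have hone : ∀ S ∈ (univ : Finset (Fin r)).powersetCard q,
        (univ.filter (fun f : V → Fin r => ∀ v ∈ e, f v ∈ S)).card = q ^ k * r ^ (n - k) := by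
      intro S hS
      have hScard : S.card = q := (Finset.mem_powersetCard.1 hS).2
      have heq : univ.filter (fun f : V → Fin r => ∀ v ∈ e, f v ∈ S)
          = Fintype.piFinset (fun v => if v ∈ e then S else univ) := by
        ext f
        simp only [mem_filter, mem_univ, true_and, Fintype.mem_piFinset]
        constructor
        · intro h v; split_ifs with hv
          · exact h v hv
          · exact mem_univ _
        · intro h v hv; have := h v; simpa [hv] using this
      rw [heq, Fintype.card_piFinset]
      have hsplit := Finset.prod_sdiff (Finset.subset_univ e)
        (f := fun v => (if v ∈ e then S else (univ : Finset (Fin r))).card)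
      rw [← hsplit]
      have h1 : ∏ v ∈ e, (if v ∈ e then S else (univ : Finset (Fin r))).card = q ^ k := by
        have hc : ∀ v ∈ e, (if v ∈ e then S else (univ : Finset (Fin r))).card = q :=
          fun v hv => by simp [hv, hScard]
        rw [Finset.prod_congr rfl hc, Finset.prod_const, hunif e he]
      have h2 : ∏ v ∈ univ \ e, (if v ∈ e then S else (univ : Finset (Fin r))).card
          = r ^ (n - k) := by
        have hc : ∀ v ∈ univ \ e, (if v ∈ e then S else (univ : Finset (Fin r))).card = r :=
          fun v hv => by simp [(Finset.mem_sdiff.1 hv).2]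
        rw [Finset.prod_congr rfl hc, Finset.prod_const, Finset.card_sdiff_of_subset (Finset.subset_univ e),
          card_univ, hunif e he]
      rw [h1, h2, mul_comm]
    calc (Bad e).card ≤ _ := Finset.card_le_card hsub
      _ ≤ ∑ S ∈ (univ : Finset (Fin r)).powersetCard q,
            (univ.filter (fun f : V → Fin r => ∀ v ∈ e, f v ∈ S)).card :=
          Finset.card_biUnion_le
      _ = ((univ : Finset (Fin r)).powersetCard q).card * (q ^ k * r ^ (n - k)) := by
          rw [Finset.sum_congr rfl hone, Finset.sum_const, smul_eq_mul]
      _ = M := by rw [Finset.card_powersetCard, card_univ, Fintype.card_fin]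
  -- bad x-tuples of colorings for one edge
  let BadX : Finset V → Finset (Fin x → V → Fin r) :=
    fun e => Fintype.piFinset (fun _ => Bad e)
  have hBadX : ∀ e ∈ E, (BadX e).card ≤ M ^ x := by
    intro e he
    rw [Fintype.card_piFinset]
    calc ∏ _i : Fin x, (Bad e).card ≤ ∏ _i : Fin x, M :=
        Finset.prod_le_prod (fun _ _ => Nat.zero_le _) (fun _ _ => hBadcard e he)
      _ = M ^ x := by rw [Finset.prod_const, card_univ, Fintype.card_fin]
  -- strict inequality
  have hstrict : E.card * M ^ x < r ^ (n * x) := by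
    have hq0r : (0:ℝ) < (q:ℝ) := by exact_mod_cast hq1
    have hr0r : (0:ℝ) < (r:ℝ) := by exact_mod_cast (show 0 < r by omega)
    have hC0r : (0:ℝ) < (r.choose q : ℝ) := by exact_mod_cast hC
    have hqC : (0:ℝ) < (q:ℝ) ^ k * (r.choose q : ℝ) := mul_pos (pow_pos hq0r k) hC0r
    have hrpos : (0:ℝ) < (r:ℝ) ^ n := pow_pos hr0r n
    have hcast : ((p:ℝ) - 1) = (q:ℝ) := by
      rw [hq, Nat.cast_sub (by omega : 1 ≤ p)]; norm_num
    have hqk : ((q:ℝ)) ^ k ≠ 0 := (pow_pos hq0r k).ne'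
    have hCne : ((r.choose q : ℕ) : ℝ) ≠ 0 := hC0r.ne' 
    have hQM : ((r:ℝ)^k / ((q:ℝ)^k * (r.choose q:ℝ))) * (M:ℝ) = (r:ℝ)^n := by
      rw [hM]; push_cast
      rw [eq_comm, ← Nat.add_sub_cancel' hkn, pow_add]
      field_simp
      ring
      rw [Nat.add_sub_cancel]
    have key : (↑(E.card * M ^ x) : ℝ) < (↑(r ^ (n * x)) : ℝ) := by
      push_cast
      calc (E.card : ℝ) * (M:ℝ) ^ x
          ≤ (1/2) * ((r : ℝ) ^ k / ((q:ℝ) ^ k * (r.choose q : ℝ))) ^ x * (M:ℝ) ^ x := by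
            rw [← hcast]
            apply mul_le_mul_of_nonneg_right hE (by positivity)
        _ = (1/2) * (((r : ℝ) ^ k / ((q:ℝ) ^ k * (r.choose q : ℝ))) * M) ^ x := by
            rw [mul_pow, mul_assoc]
        _ = (1/2) * ((r:ℝ) ^ n) ^ x := by rw [hQM]
        _ < ((r:ℝ)^n) ^ x := by
            have : (0:ℝ) < ((r:ℝ)^n)^x := by positivity
            linarith
        _ = (r:ℝ) ^ (n * x) := by rw [← pow_mul]
    exact_mod_cast key
  -- find a good tuple
  have hcardΩ : Fintype.card (Fin x → V → Fin r) = r ^ (n * x) := by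
    rw [Fintype.card_fun, Fintype.card_fun, Fintype.card_fin, Fintype.card_fin, ← pow_mul]
  have hunion : (E.biUnion BadX).card < Fintype.card (Fin x → V → Fin r) := by
    calc (E.biUnion BadX).card ≤ ∑ e ∈ E, (BadX e).card := Finset.card_biUnion_le
      _ ≤ ∑ _e ∈ E, M ^ x := Finset.sum_le_sum hBadX
      _ = E.card * M ^ x := by rw [Finset.sum_const, smul_eq_mul]
      _ < r ^ (n * x) := hstrict
      _ = _ := hcardΩ.symm
  obtain ⟨χ, hχ⟩ : ∃ χ : Fin x → V → Fin r, χ ∉ E.biUnion BadX := by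
    by_contra h
    push_neg at h
    have : (univ : Finset (Fin x → V → Fin r)) ⊆ E.biUnion BadX := fun χ _ => h χ
    have := Finset.card_le_card this
    rw [card_univ] at this
    omega
  refine ⟨χ, fun e he => ?_⟩
  have : χ ∉ BadX e := fun hmem => hχ (Finset.mem_biUnion.2 ⟨e, he, hmem⟩)
  rw [Fintype.mem_piFinset] at this
  push_neg at this
  obtain ⟨i, hi⟩ := this
  simp only [Bad, mem_filter, mem_univ, true_and, not_le] at hi
  exact ⟨i, by omega⟩

theorem stmt17 {V : Type*} [Fintype V] [DecidableEq V] (E : Finset (Finset V)) (k r p x : ℕ)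
    (hunif : ∀ e ∈ E, e.card = k) (hp2 : 2 ≤ p) (hpr : p ≤ r) (hpk : p ≤ k) (hx : 0 < x)
    (hE : (E.card : ℝ) ≤
      (1 / 2) * ((r : ℝ) ^ k / (((p : ℝ) - 1) ^ k * (r.choose (p - 1) : ℝ))) ^ x) :
    HasStrongCover E r p x ∧ coverNumber E r p ≤ x := by
  have h : HasStrongCover E r p x :=
    stmt17_aux E k r p x hunif hp2 hpr hpk hx hE
  exact ⟨h, Nat.sInf_le h⟩
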